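/- For all real numbers n₁, n₂ > 0 and β > 0, the minimum value of H(γ₁, γ₂) = 1/(γ₁²·n₁) + 1/(γ₂²·n₂) over {(γ₁, γ₂) : γ₁ > 0, γ₂ > 0, γ₁ + γ₂ = β} equals (n₁^{-1/3} + n₂^{-1/3})³/β². -/

import Mathlib

open Real

lemma radon3 (a b x y : ℝ) (ha : 0 < a) (hb : 0 < b) (hx : 0 < x) (hy : 0 < y) :
    (a + b) ^ 3 / (x + y) ^ 2 ≤ a ^ 3 / x ^ 2 + b ^ 3 / y ^ 2 := by
  rw [div_add_div _ _ (by positivity) (by positivity), div_le_div_iff₀ (by positivity) (by positivity)]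
  nlinarith [sq_nonneg (a*y - b*x), sq_nonneg (a*y + b*x), mul_pos hx hy, mul_pos ha hb,
    mul_pos (mul_pos hx hy) (mul_pos ha hb), sq_nonneg (a*y*y - b*x*x),
    mul_nonneg (mul_nonneg ha.le hb.le) (sq_nonneg (x - y)),
    mul_nonneg (mul_nonneg hx.le hy.le) (sq_nonneg (a*y - b*x)),
    mul_nonneg (mul_nonneg ha.le hy.le) (sq_nonneg (a*y - b*x)),
    mul_nonneg (mul_nonneg hb.le hx.le) (sq_nonneg (a*y - b*x))]

/-- The minimum value of the fast-rate objective H(γ₁, γ₂) = 1/(γ₁²·n₁) + 1/(γ₂²·n₂) over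
{(γ₁, γ₂) : γ₁ > 0, γ₂ > 0, γ₁ + γ₂ = β} equals (n₁^{-1/3} + n₂^{-1/3})³/β². -/
theorem fast_rate_min_value
    (n₁ n₂ β : ℝ) (hn₁ : 0 < n₁) (hn₂ : 0 < n₂) (hβ : 0 < β) :
    IsLeast
      {v : ℝ | ∃ γ₁ γ₂ : ℝ, 0 < γ₁ ∧ 0 < γ₂ ∧ γ₁ + γ₂ = β ∧
        v = 1 / (γ₁ ^ 2 * n₁) + 1 / (γ₂ ^ 2 * n₂)}
      ((n₁ ^ (-(1 : ℝ) / 3) + n₂ ^ (-(1 : ℝ) / 3)) ^ 3 / β ^ 2) := by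
  set a := n₁ ^ (-(1 : ℝ) / 3) with hadef
  set b := n₂ ^ (-(1 : ℝ) / 3) with hbdef
  have ha : 0 < a := rpow_pos_of_pos hn₁ _
  have hb : 0 < b := rpow_pos_of_pos hn₂ _
  have ha3 : a ^ 3 = 1 / n₁ := by
    rw [hadef, ← rpow_natCast (n₁ ^ (-(1:ℝ)/3)) 3, ← rpow_mul hn₁.le]
    norm_num
    rw [rpow_neg_one]
  have hb3 : b ^ 3 = 1 / n₂ := by
    rw [hbdef, ← rpow_natCast (n₂ ^ (-(1:ℝ)/3)) 3, ← rpow_mul hn₂.le]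
    norm_num
    rw [rpow_neg_one]
  constructor
  · refine ⟨β * a / (a + b), β * b / (a + b), by positivity, by positivity, by field_simp, ?_⟩
    have hab : (0:ℝ) < a + b := by positivity
    have hn1 : n₁ = 1 / a ^ 3 := by rw [ha3]; field_simp
    have hn2 : n₂ = 1 / b ^ 3 := by rw [hb3]; field_simp
    rw [hn1, hn2]
    field_simp
  · rintro v ⟨γ₁, γ₂, h1, h2, hsum, rfl⟩
    have key := radon3 a b γ₁ γ₂ ha hb h1 h2
    rw [hsum] at key
    have e1 : 1 / (γ₁ ^ 2 * n₁) = a ^ 3 / γ₁ ^ 2 := by rw [ha3]; field_simp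
    have e2 : 1 / (γ₂ ^ 2 * n₂) = b ^ 3 / γ₂ ^ 2 := by rw [hb3]; field_simp
    rw [e1, e2]
    exact key
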